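/- The map f determined by f(t) = s^{−1}(s−1)^2 and f(u) = s − s^{−1} defines a ℂ-algebra isomorphism from R = ℂ[t,t^{−1},u]/(u^2 − t^2 − 4t) onto S = ℂ[s, s^{−1}, (s−1)^{−1}], with inverse determined by s ↦ (t+2+u)/2 and s^{−1} ↦ (t+2−u)/2. -/

import Mathlib

set_option synthInstance.maxHeartbeats 1000000
set_option maxHeartbeats 1000000

open MvPolynomial in
/-- `R = ℂ[t, t⁻¹, u] / (u² − t² − 4t)`, modelled as `ℂ[x₀,x₁,x₂]` modulo the
ideal generated by `x₀x₁ − 1` (making `x₀ = t` invertible with inverse `x₁`)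
and `x₂² − x₀² − 4x₀`. -/
noncomputable abbrev R3 : Type :=
  MvPolynomial (Fin 3) ℂ ⧸
    Ideal.span {(X 0 * X 1 - 1 : MvPolynomial (Fin 3) ℂ), X 2 ^ 2 - X 0 ^ 2 - 4 * X 0}

open MvPolynomial in
/-- the class of `t` in `R`. -/
noncomputable def tR : R3 := Ideal.Quotient.mk _ (X 0)

open MvPolynomial in
/-- the class of `u` in `R`. -/
noncomputable def uR : R3 := Ideal.Quotient.mk _ (X 2)

open Polynomial in
/-- `S = ℂ[s, s⁻¹, (s−1)⁻¹]`, the localization of `ℂ[s]` at the multiplicative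
set generated by `s` and `s − 1`. -/
noncomputable abbrev S3 : Type :=
  Localization (Submonoid.closure {(X : ℂ[X]), X - 1})

open Polynomial in
/-- the element `s` of `S`. -/
noncomputable def sS : S3 := algebraMap ℂ[X] S3 X

open Polynomial in
noncomputable abbrev Msub : Submonoid ℂ[X] := Submonoid.closure {(X : ℂ[X]), X - 1}

open Polynomial in
lemma isUnit_sS : IsUnit sS :=
  IsLocalization.map_units (M := Msub) S3 ⟨X, Submonoid.subset_closure (Set.mem_insert _ _)⟩

open Polynomial in
lemma isUnit_sS1 : IsUnit (sS - 1) := by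
  have h : ((X : ℂ[X]) - 1) ∈ Msub :=
    Submonoid.subset_closure (Set.mem_insert_of_mem _ rfl)
  have := IsLocalization.map_units (M := Msub) S3 ⟨X - 1, h⟩
  simpa [sS, map_sub] using this

lemma hsa : sS * Ring.inverse sS = 1 := Ring.mul_inverse_cancel _ isUnit_sS
lemma hsb : (sS - 1) * Ring.inverse (sS - 1) = 1 := Ring.mul_inverse_cancel _ isUnit_sS1

open MvPolynomial in
noncomputable abbrev Idl : Ideal (MvPolynomial (Fin 3) ℂ) :=
  Ideal.span {(X 0 * X 1 - 1 : MvPolynomial (Fin 3) ℂ), X 2 ^ 2 - X 0 ^ 2 - 4 * X 0}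

noncomputable def cS : S3 := algebraMap ℂ S3 (2⁻¹ : ℂ)
noncomputable def cR : R3 := algebraMap ℂ R3 (2⁻¹ : ℂ)

lemma h2S : cS * 2 = 1 := by
  rw [cS, ← map_ofNat (algebraMap ℂ S3) 2, ← map_mul, ← map_one (algebraMap ℂ S3)]
  norm_num

lemma h2R : cR * 2 = 1 := by
  rw [cR, ← map_ofNat (algebraMap ℂ R3) 2, ← map_mul, ← map_one (algebraMap ℂ R3)]
  norm_num

open MvPolynomial in
noncomputable def F0 : MvPolynomial (Fin 3) ℂ →ₐ[ℂ] S3 :=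
  aeval ![Ring.inverse sS * (sS - 1) ^ 2, sS * (Ring.inverse (sS - 1)) ^ 2, sS - Ring.inverse sS]

open MvPolynomial in
lemma F0_rels : ∀ a ∈ Ideal.span {(X 0 * X 1 - 1 : MvPolynomial (Fin 3) ℂ),
    X 2 ^ 2 - X 0 ^ 2 - 4 * X 0}, F0 a = 0 := by
  intro a ha
  have hle : Ideal.span {(X 0 * X 1 - 1 : MvPolynomial (Fin 3) ℂ),
      X 2 ^ 2 - X 0 ^ 2 - 4 * X 0} ≤ RingHom.ker F0.toRingHom := by
    rw [Ideal.span_le]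
    rintro p (rfl | rfl) <;> simp only [SetLike.mem_coe, RingHom.mem_ker, AlgHom.toRingHom_eq_coe,
      RingHom.coe_coe, F0, map_sub, map_mul, map_pow, map_one, map_ofNat, aeval_X,
      Matrix.cons_val_zero, Matrix.cons_val_one, Matrix.head_cons, Matrix.cons_val_two, Matrix.tail_cons, Matrix.head_cons]
    · have h1 := hsa; have h2 := hsb
      linear_combination ((Ring.inverse (sS - 1)) ^ 2 + (-2)*sS*(Ring.inverse (sS - 1)) ^ 2 + sS ^ 2*(Ring.inverse (sS - 1)) ^ 2) * h1 + ((1:S3) + (-1)*(Ring.inverse (sS - 1)) + sS*(Ring.inverse (sS - 1))) * h2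
    · have h1 := hsa
      linear_combination ((4:S3)*(Ring.inverse sS) + (-6)*sS*(Ring.inverse sS) + (-1)*sS ^ 2 + (4)*sS ^ 2*(Ring.inverse sS) + (-1)*sS ^ 3*(Ring.inverse sS)) * h1
  exact hle ha

noncomputable def Fb : R3 →ₐ[ℂ] S3 := Ideal.Quotient.liftₐ _ F0 F0_rels

open MvPolynomial in
lemma Fb_t : Fb tR = Ring.inverse sS * (sS - 1) ^ 2 := by
  rw [tR, Fb, Ideal.Quotient.liftₐ_apply]
  simp [F0]

open MvPolynomial in
lemma Fb_u : Fb uR = sS - Ring.inverse sS := by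
  rw [uR, Fb, Ideal.Quotient.liftₐ_apply]
  simp [F0]

open MvPolynomial in
noncomputable def t1R : R3 := Ideal.Quotient.mk _ (X 1)

open MvPolynomial in
lemma ht : tR * t1R = 1 := by
  rw [tR, t1R, ← map_mul, ← map_one (Ideal.Quotient.mk _), Ideal.Quotient.mk_eq_mk_iff_sub_mem]
  exact Ideal.subset_span (Set.mem_insert _ _)

open MvPolynomial in
lemma hu2 : uR ^ 2 = tR ^ 2 + 4 * tR := by
  have h : Ideal.Quotient.mk Idl (X 2 ^ 2 - X 0 ^ 2 - 4 * X 0) = 0 :=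
    Ideal.Quotient.eq_zero_iff_mem.mpr (Ideal.subset_span (Set.mem_insert_of_mem _ rfl))
  rw [tR, uR]
  have h2 : (Ideal.Quotient.mk Idl (X 2)) ^ 2
      - (Ideal.Quotient.mk Idl (X 0)) ^ 2
      - 4 * Ideal.Quotient.mk Idl (X 0) = 0 := by
    have h4 : Ideal.Quotient.mk Idl (4 : MvPolynomial (Fin 3) ℂ) = 4 := map_ofNat _ 4
    simpa [h4] using h
  linear_combination h2

noncomputable def aR : R3 := cR * (tR + 2 + uR)
noncomputable def bR : R3 := cR * (tR + 2 - uR)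

lemma hab : aR * bR = 1 := by
  have h2 := h2R; have hu := hu2
  rw [aR, bR]
  linear_combination ((1:R3) + (2)*cR) * h2 + ((-1)*cR ^ 2) * hu

lemma ha1 : (aR - 1) * (cR * (uR - tR) * t1R) = 1 := by
  have h2 := h2R; have hu := hu2; have htt := ht
  rw [aR]
  linear_combination ((1:R3) + (2)*cR + cR*uR*t1R + (-1)*cR*tR*t1R) * h2 + (cR ^ 2*t1R) * hu + ((4:R3)*cR ^ 2) * htt

open Polynomial in
noncomputable def G0 : ℂ[X] →ₐ[ℂ] R3 := Polynomial.aeval aR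

open Polynomial in
lemma G0_units : ∀ y : Msub, IsUnit (G0 (y : ℂ[X])) := by
  rintro ⟨y, hy⟩
  induction hy using Submonoid.closure_induction with
  | mem x hx =>
    rcases hx with rfl | rfl
    · exact IsUnit.of_mul_eq_one (a := _) bR (by simpa [G0] using hab)
    · exact IsUnit.of_mul_eq_one (a := _) (cR * (uR - tR) * t1R) (by simpa [G0] using ha1)
  | one => simp
  | mul x y hx hy ihx ihy => rw [map_mul]; exact ihx.mul ihy

noncomputable def G : S3 →+* R3 := IsLocalization.lift (M := Msub) (S := S3) G0_units

open Polynomial in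
lemma G_s : G sS = aR := by
  rw [sS, G, IsLocalization.lift_eq]
  simp [G0]

lemma G_sinv : G (Ring.inverse sS) = bR := by
  have h := congrArg G hsa
  rw [map_mul, map_one, G_s] at h
  calc G (Ring.inverse sS) = G (Ring.inverse sS) * (aR * bR) := by rw [hab, mul_one]
  _ = (aR * G (Ring.inverse sS)) * bR := by ring
  _ = bR := by rw [h, one_mul]

open MvPolynomial in
lemma GFt : G (Fb tR) = tR := by
  have h2 := h2R; have hu := hu2
  rw [Fb_t, map_mul, map_pow, map_sub, map_one, G_sinv, G_s, aR, bR]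
  linear_combination (tR + (-2)*cR + cR*uR + cR*tR + (4:R3)*cR ^ 2 + (2)*cR ^ 2*uR + (-2)*cR ^ 2*uR ^ 2 + (10)*cR ^ 2*tR + (2)*cR ^ 2*tR ^ 2) * h2 + ((2:R3)*cR ^ 3 + (-1)*cR ^ 3*uR + (-1)*cR ^ 3*tR) * hu

lemma GFu : G (Fb uR) = uR := by
  rw [Fb_u, map_sub, G_s, G_sinv, aR, bR]
  linear_combination uR * h2R

lemma GFt1 : G (Fb t1R) = t1R := by
  have h01 : Fb tR * Fb t1R = 1 := by rw [← map_mul, ht, map_one]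
  have h := congrArg G h01
  rw [map_mul, map_one, GFt] at h
  calc G (Fb t1R) = (tR * t1R) * G (Fb t1R) := by rw [ht, one_mul]
  _ = t1R * (tR * G (Fb t1R)) := by ring
  _ = t1R := by rw [h, mul_one]

open MvPolynomial in
lemma GF : Function.LeftInverse G Fb := by
  have key : (G.comp Fb.toRingHom).comp (Ideal.Quotient.mk Idl) = (Ideal.Quotient.mk Idl) := by
    apply MvPolynomial.ringHom_ext
    · intro r
      simp only [RingHom.comp_apply]
      have h1 : (Ideal.Quotient.mk Idl) (MvPolynomial.C r) = algebraMap ℂ R3 r := rfl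
      rw [h1]
      have h2 : Fb.toRingHom (algebraMap ℂ R3 r) = algebraMap ℂ S3 r := Fb.commutes r
      rw [h2]
      have h3 : algebraMap ℂ S3 r = algebraMap (Polynomial ℂ) S3 (Polynomial.C r) := by
        rw [IsScalarTower.algebraMap_apply ℂ (Polynomial ℂ) S3]
        rfl
      rw [h3, G, IsLocalization.lift_eq]
      simp [G0]
    · intro i
      simp only [RingHom.comp_apply]
      fin_cases i
      · exact GFt
      · exact GFt1
      · exact GFu
  intro x
  obtain ⟨y, rfl⟩ := Ideal.Quotient.mk_surjective x
  exact RingHom.congr_fun key y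

lemma Fb_c : Fb cR = cS := Fb.commutes _

lemma Fb_a : Fb aR = sS := by
  have h2 := h2S; have h1 := hsa
  rw [aR, map_mul, map_add, map_add, Fb_c, Fb_t, Fb_u, map_ofNat]
  linear_combination sS * h2 + ((-2)*cS + sS*cS) * h1

lemma Fb_b : Fb bR = Ring.inverse sS := by
  have h2 := h2S; have h1 := hsa
  rw [bR, map_mul, map_sub, map_add, Fb_c, Fb_t, Fb_u, map_ofNat]
  linear_combination (Ring.inverse sS) * h2 + ((-2)*cS + sS*cS) * h1

open Polynomial in
lemma FG : Function.RightInverse G Fb := by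
  have key : Fb.toRingHom.comp G = RingHom.id S3 := by
    apply IsLocalization.ringHom_ext Msub
    apply Polynomial.ringHom_ext
    · intro r
      have h3 : algebraMap (Polynomial ℂ) S3 (C r) = algebraMap ℂ S3 r := by
        rw [IsScalarTower.algebraMap_apply ℂ (Polynomial ℂ) S3]; rfl
      show Fb (G (algebraMap (Polynomial ℂ) S3 (C r))) = algebraMap (Polynomial ℂ) S3 (C r)
      rw [G, IsLocalization.lift_eq]
      have h5 : G0.toRingHom (C r) = algebraMap ℂ R3 r := by simp [G0]
      rw [h5, h3]
      exact Fb.commutes r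
    · show Fb (G (algebraMap (Polynomial ℂ) S3 X)) = algebraMap (Polynomial ℂ) S3 X
      have h6 : G (algebraMap (Polynomial ℂ) S3 X) = aR := G_s
      rw [h6]
      exact Fb_a
  intro y
  exact RingHom.congr_fun key y

lemma smul_eq_aR : (2 : ℂ)⁻¹ • (tR + 2 + uR) = aR := by
  rw [Algebra.smul_def ((2:ℂ)⁻¹) (tR + 2 + uR)]; rfl

lemma smul_eq_bR : (2 : ℂ)⁻¹ • (tR + 2 - uR) = bR := by
  rw [Algebra.smul_def ((2:ℂ)⁻¹) (tR + 2 - uR)]; rfl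

/-- The assignment `t ↦ s⁻¹(s−1)²`, `u ↦ s − s⁻¹` defines a `ℂ`-algebra
isomorphism `f : R ≃ S`, whose inverse is determined by `s ↦ (t+2+u)/2` and
`s⁻¹ ↦ (t+2−u)/2`. -/
theorem stmt17 :
    ∃ f : R3 ≃ₐ[ℂ] S3,
      f tR = Ring.inverse sS * (sS - 1) ^ 2 ∧
      f uR = sS - Ring.inverse sS ∧
      f.symm sS = (2 : ℂ)⁻¹ • (tR + 2 + uR) ∧
      f.symm (Ring.inverse sS) = (2 : ℂ)⁻¹ • (tR + 2 - uR) := by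
  have hbij : Function.Bijective Fb := ⟨GF.injective, FG.surjective⟩
  refine ⟨AlgEquiv.ofBijective Fb hbij, ?_, ?_, ?_, ?_⟩
  · exact Fb_t
  · exact Fb_u
  · rw [AlgEquiv.symm_apply_eq, AlgEquiv.coe_ofBijective, smul_eq_aR]
    exact Fb_a.symm
  · rw [AlgEquiv.symm_apply_eq, AlgEquiv.coe_ofBijective, smul_eq_bR]
    exact Fb_b.symm
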